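/- arXiv:1301.6235 — 4 statements merged into one kernel-verified Lean document; each statement's English description precedes it below -/
import Mathlib

section
/- Let n ≥ 3 and p > n/(n-2). Set θ = 1/(p-1) and define u(x) = (1+|x|²)^{-θ} on ℝⁿ. Then there exist constants 0 < c₁ ≤ c₂ such that c₁ u(x)^p ≤ -Δu(x) ≤ c₂ u(x)^p for all x ∈ ℝⁿ. In particular u is a positive solution of -Δu = c(x)u^p for a double bounded function c. -/
open MeasureTheory

/-- The Laplacian of `u : ℝⁿ → ℝ`, as the sum of second derivatives along the
standard coordinate directions. -/
noncomputable def laplacian {n : ℕ} (u : EuclideanSpace ℝ (Fin n) → ℝ)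
    (x : EuclideanSpace ℝ (Fin n)) : ℝ :=
  ∑ i : Fin n, iteratedDeriv 2 (fun t : ℝ => u (x + t • EuclideanSpace.basisFun (Fin n) ℝ i)) 0

lemma key_deriv (A B θ : ℝ) (hA : B ^ 2 < A) :
    iteratedDeriv 2 (fun t : ℝ => (A + 2 * B * t + t ^ 2) ^ (-θ)) 0
      = 4 * θ * (θ + 1) * B ^ 2 * A ^ (-θ - 2) - 2 * θ * A ^ (-θ - 1) := by
  have hApos : 0 < A := lt_of_le_of_lt (sq_nonneg B) hA
  have hgpos : ∀ t : ℝ, 0 < A + 2 * B * t + t ^ 2 := by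
    intro t; nlinarith [sq_nonneg (B + t)]
  have hg : ∀ t : ℝ, HasDerivAt (fun s : ℝ => A + 2 * B * s + s ^ 2) (2 * B + 2 * t) t := by
    intro t
    have h := (((hasDerivAt_id t).const_mul (2 * B)).const_add A).add (hasDerivAt_pow 2 t)
    refine h.congr_deriv ?_; ring
  have hf1 : ∀ t : ℝ, HasDerivAt (fun s : ℝ => (A + 2 * B * s + s ^ 2) ^ (-θ))
      (-θ * (A + 2 * B * t + t ^ 2) ^ (-θ - 1) * (2 * B + 2 * t)) t := by
    intro t
    have h := (hg t).rpow_const (p := -θ) (Or.inl (hgpos t).ne')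
    convert h using 1; ring
  have hd1 : deriv (fun s : ℝ => (A + 2 * B * s + s ^ 2) ^ (-θ))
      = fun t => -θ * (A + 2 * B * t + t ^ 2) ^ (-θ - 1) * (2 * B + 2 * t) := by
    funext t; exact (hf1 t).deriv
  have hf2 : HasDerivAt (fun t : ℝ => -θ * (A + 2 * B * t + t ^ 2) ^ (-θ - 1) * (2 * B + 2 * t))
      (((-θ - 1) * (A + 2 * B * 0 + 0 ^ 2) ^ (-θ - 1 - 1) * (2 * B + 2 * 0)) * -θ * (2 * B + 2 * 0)
        + -θ * (A + 2 * B * 0 + 0 ^ 2) ^ (-θ - 1) * 2) 0 := by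
    have h1 : HasDerivAt (fun t : ℝ => (A + 2 * B * t + t ^ 2) ^ (-θ - 1))
        ((-θ - 1) * (A + 2 * B * 0 + 0 ^ 2) ^ (-θ - 1 - 1) * (2 * B + 2 * 0)) 0 := by
      have h := (hg 0).rpow_const (p := -θ - 1) (Or.inl (hgpos 0).ne')
      convert h using 1; ring
    have h2 : HasDerivAt (fun t : ℝ => 2 * B + 2 * t) 2 0 := by
      have h := ((hasDerivAt_id (0:ℝ)).const_mul 2).const_add (2 * B)
      refine h.congr_deriv ?_; ring
    have h3 := ((h1.const_mul (-θ)).mul h2)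
    refine h3.congr_deriv ?_
    ring
  rw [iteratedDeriv_succ, iteratedDeriv_succ, iteratedDeriv_zero, hd1]
  rw [hf2.deriv]
  have e0 : A + 2 * B * 0 + 0 ^ 2 = A := by ring
  rw [e0]
  have e1 : (-θ - 1 - 1 : ℝ) = -θ - 2 := by ring
  rw [e1]
  ring

theorem stmt_1 (n : ℕ) (hn : 3 ≤ n) (p : ℝ) (hp : p > n / (n - 2))
    (θ : ℝ) (hθ : θ = 1 / (p - 1))
    (u : EuclideanSpace ℝ (Fin n) → ℝ)
    (hu : ∀ x, u x = (1 + ‖x‖ ^ 2) ^ (-θ)) :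
    ∃ c₁ c₂ : ℝ, 0 < c₁ ∧ c₁ ≤ c₂ ∧
      ∀ x, c₁ * u x ^ p ≤ -laplacian u x ∧ -laplacian u x ≤ c₂ * u x ^ p := by
  have hn2 : (2:ℝ) < n := by
    have : (3:ℝ) ≤ n := by exact_mod_cast hn
    linarith
  have hn2' : (0:ℝ) < (n:ℝ) - 2 := by linarith
  have hp1 : 1 < p := by
    have : (1:ℝ) < (n:ℝ) / ((n:ℝ) - 2) := by
      rw [lt_div_iff₀ hn2']; linarith
    linarith
  have hp1' : (0:ℝ) < p - 1 := by linarith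
  have hθpos : 0 < θ := by rw [hθ]; positivity
  have hθp : θ * (p - 1) = 1 := by
    rw [hθ, one_div, inv_mul_cancel₀ (sub_ne_zero.mpr (ne_of_gt hp1))]
  have hk : 0 < (n:ℝ) - 2 - 2 * θ := by
    have h2 : (n:ℝ) < p * ((n:ℝ) - 2) := by
      rw [gt_iff_lt, div_lt_iff₀ hn2'] at hp; exact hp
    have h3 : (2:ℝ) < ((n:ℝ) - 2) * (p - 1) := by nlinarith
    nlinarith [hθp, h3, hp1']
  set k : ℝ := (n:ℝ) - 2 - 2 * θ with hkdef
  refine ⟨2 * θ * min (n:ℝ) k, 2 * θ * max (n:ℝ) k, by positivity, by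
      gcongr; exact min_le_max, ?_⟩
  intro x
  set r2 : ℝ := ‖x‖ ^ 2 with hr2
  have hr2nn : 0 ≤ r2 := sq_nonneg _
  set A : ℝ := 1 + r2 with hA
  have hApos : 0 < A := by positivity
  have hnormsq : r2 = ∑ j : Fin n, (x j) ^ 2 := by
    rw [hr2, EuclideanSpace.norm_eq, Real.sq_sqrt (by positivity)]
    simp [Real.norm_eq_abs, sq_abs]
  have hxi : ∀ i : Fin n, (x i) ^ 2 < A := by
    intro i
    have h : (x i) ^ 2 ≤ r2 := by
      rw [hnormsq]
      exact Finset.single_le_sum (fun j _ => sq_nonneg (x j)) (Finset.mem_univ i)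
    rw [hA]; linarith
  have hfun : ∀ i : Fin n, (fun t : ℝ => u (x + t • EuclideanSpace.basisFun (Fin n) ℝ i))
      = fun t : ℝ => (A + 2 * (x i) * t + t ^ 2) ^ (-θ) := by
    intro i
    funext t
    rw [hu]
    congr 1
    have hnorm : ‖x + t • EuclideanSpace.basisFun (Fin n) ℝ i‖ ^ 2
        = ‖x‖ ^ 2 + 2 * (t * x i) + t ^ 2 := by
      rw [norm_add_sq_real, real_inner_smul_right, norm_smul]
      have h1 : (inner ℝ x (EuclideanSpace.basisFun (Fin n) ℝ i) : ℝ) = x i := by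
        rw [EuclideanSpace.basisFun_apply]
        simpa using EuclideanSpace.inner_single_right (𝕜 := ℝ) i 1 x
      have h2 : ‖EuclideanSpace.basisFun (Fin n) ℝ i‖ = 1 := by
        rw [EuclideanSpace.basisFun_apply]; simp
      rw [h1, h2]
      simp [mul_pow, Real.norm_eq_abs, sq_abs]
    rw [hnorm, hA, hr2]; ring
  have hlap : laplacian u x = 4 * θ * (θ + 1) * r2 * A ^ (-θ - 2) - 2 * θ * n * A ^ (-θ - 1) := by
    unfold laplacian
    have hsum : ∀ i : Fin n,
        iteratedDeriv 2 (fun t : ℝ => u (x + t • EuclideanSpace.basisFun (Fin n) ℝ i)) 0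
          = 4 * θ * (θ + 1) * (x i) ^ 2 * A ^ (-θ - 2) - 2 * θ * A ^ (-θ - 1) := by
      intro i
      rw [hfun i]
      exact key_deriv A (x i) θ (hxi i)
    rw [Finset.sum_congr rfl (fun i _ => hsum i), Finset.sum_sub_distrib, Finset.sum_const,
      Finset.card_univ, Fintype.card_fin, nsmul_eq_mul]
    have h4 : ∑ i : Fin n, 4 * θ * (θ + 1) * (x i) ^ 2 * A ^ (-θ - 2)
        = 4 * θ * (θ + 1) * r2 * A ^ (-θ - 2) := by
      rw [← Finset.sum_mul, ← Finset.mul_sum, ← hnormsq]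
    rw [h4]; ring
  have hup : u x ^ p = A ^ (-θ - 1) := by
    rw [hu, ← hr2, ← hA, ← Real.rpow_mul hApos.le]
    congr 1
    linear_combination -hθp
  have hsplit1 : A ^ (-θ - 1) = A ^ (-θ - 2) * A := by
    rw [← Real.rpow_add_one hApos.ne']
    congr 1; ring
  have hPpos : 0 < A ^ (-θ - 2) := Real.rpow_pos_of_pos hApos _
  have hneg : -laplacian u x = A ^ (-θ - 2) * (2 * θ * ((n:ℝ) + k * r2)) := by
    rw [hlap, hsplit1]
    rw [hkdef, hA]
    ring
  constructor
  · rw [hup, hneg, hsplit1]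
    have : 2 * θ * min (n:ℝ) k * (A ^ (-θ - 2) * A) = A ^ (-θ - 2) * (2 * θ * (min (n:ℝ) k * A)) := by ring
    rw [this]
    gcongr
    rw [hA]
    nlinarith [min_le_left (n:ℝ) k, min_le_right (n:ℝ) k, hr2nn, hθpos]
  · rw [hup, hneg, hsplit1]
    have : 2 * θ * max (n:ℝ) k * (A ^ (-θ - 2) * A) = A ^ (-θ - 2) * (2 * θ * (max (n:ℝ) k * A)) := by ring
    rw [this]
    gcongr
    rw [hA]
    nlinarith [le_max_left (n:ℝ) k, le_max_right (n:ℝ) k, hr2nn, hθpos]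
end

section
/- Let n ≥ 1, 0 < α < n, p = n/(n-α), and suppose u : ℝⁿ → ℝ is positive measurable and satisfies u(x) ≥ (R+|x|)^{α-n} ∫_{B_R(0)} u^p(y)dy for all R > 0. Then ∫_{B_R(0)} u^p dx ≥ c (∫_{B_R(0)} u^p dy)^p for a constant c > 0 independent of R, and consequently ∫_{ℝⁿ} u^p dx < ∞. -/
open MeasureTheory

theorem stmt_6 (n : ℕ) (hn : 1 ≤ n) (α p : ℝ) (hα : 0 < α) (hαn : α < n)
    (hp : p = n / ((n : ℝ) - α))
    (u : EuclideanSpace ℝ (Fin n) → ℝ)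
    (hpos : ∀ x, 0 < u x) (hmeas : Measurable u)
    (hlow : ∀ R > 0, ∀ x,
      (R + ‖x‖) ^ (α - n) * (∫ y in Metric.ball (0 : EuclideanSpace ℝ (Fin n)) R, u y ^ p) ≤ u x) :
    (∃ c > 0, ∀ R > 0,
        c * (∫ y in Metric.ball (0 : EuclideanSpace ℝ (Fin n)) R, u y ^ p) ^ p ≤
          ∫ x in Metric.ball (0 : EuclideanSpace ℝ (Fin n)) R, u x ^ p) ∧
      ∃ C : ℝ, ∀ R > 0, (∫ x in Metric.ball (0 : EuclideanSpace ℝ (Fin n)) R, u x ^ p) ≤ C := by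
  haveI : Nontrivial (EuclideanSpace ℝ (Fin n)) := by
    apply Module.nontrivial_of_finrank_pos (R := ℝ)
    rw [finrank_euclideanSpace_fin]
    omega
  have hnα : (0:ℝ) < (n:ℝ) - α := by linarith
  have hp1 : 1 < p := by
    rw [hp, lt_div_iff₀ hnα]
    linarith
  have hp0 : 0 < p := by linarith
  have hexp : (α - n) * p = -n := by
    rw [hp]; field_simp; ring
  set v : ℝ := (volume (Metric.ball (0 : EuclideanSpace ℝ (Fin n)) 1)).toReal with hv
  have hvpos : 0 < v := by
    apply ENNReal.toReal_pos
    · exact (Metric.measure_ball_pos volume _ one_pos).ne'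
    · exact measure_ball_lt_top.ne
  set c : ℝ := v / 2 ^ n with hc
  have hcpos : 0 < c := by positivity
  have hInonneg : ∀ R : ℝ,
      0 ≤ ∫ y in Metric.ball (0 : EuclideanSpace ℝ (Fin n)) R, u y ^ p := by
    intro R
    apply setIntegral_nonneg measurableSet_ball
    intro x _
    exact Real.rpow_nonneg (hpos x).le _
  have key : ∀ R > 0,
      c * (∫ y in Metric.ball (0 : EuclideanSpace ℝ (Fin n)) R, u y ^ p) ^ p ≤
        ∫ x in Metric.ball (0 : EuclideanSpace ℝ (Fin n)) R, u x ^ p := by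
    intro R hR
    set I : ℝ := ∫ y in Metric.ball (0 : EuclideanSpace ℝ (Fin n)) R, u y ^ p with hI
    by_cases hint : IntegrableOn (fun y => u y ^ p)
        (Metric.ball (0 : EuclideanSpace ℝ (Fin n)) R) volume
    · have hI0 : 0 ≤ I := hInonneg R
      have hpt : ∀ x ∈ Metric.ball (0 : EuclideanSpace ℝ (Fin n)) R,
          (2 * R) ^ (-(n:ℝ)) * I ^ p ≤ u x ^ p := by
        intro x hx
        have hxR : ‖x‖ < R := by simpa using hx
        have hbase : (0:ℝ) < R + ‖x‖ := by positivity
        have h2R : R + ‖x‖ ≤ 2 * R := by linarith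
        have h1 : (2 * R) ^ (α - n) ≤ (R + ‖x‖) ^ (α - n) :=
          Real.rpow_le_rpow_of_nonpos hbase h2R (by linarith)
        have h2 : (2 * R) ^ (α - n) * I ≤ u x := by
          refine le_trans ?_ (hlow R hR x)
          exact mul_le_mul_of_nonneg_right h1 hI0
        have h3 : ((2 * R) ^ (α - n) * I) ^ p ≤ u x ^ p := by
          apply Real.rpow_le_rpow _ h2 hp0.le
          positivity
        calc (2 * R) ^ (-(n:ℝ)) * I ^ p
            = ((2 * R) ^ (α - n) * I) ^ p := by
              rw [Real.mul_rpow (by positivity) hI0,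
                ← Real.rpow_mul (by positivity : (0:ℝ) ≤ 2 * R) (α - n) p, hexp]
          _ ≤ u x ^ p := h3
      have hconst : IntegrableOn
          (fun _ : EuclideanSpace ℝ (Fin n) => (2 * R) ^ (-(n:ℝ)) * I ^ p)
          (Metric.ball (0 : EuclideanSpace ℝ (Fin n)) R) volume :=
        integrableOn_const measure_ball_lt_top.ne enorm_ne_top
      have hmono := setIntegral_mono_on hconst hint measurableSet_ball hpt
      rw [setIntegral_const] at hmono
      have hvol : (volume (Metric.ball (0 : EuclideanSpace ℝ (Fin n)) R)).toReal
          = R ^ n * v := by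
        rw [Measure.addHaar_ball volume (0 : EuclideanSpace ℝ (Fin n)) hR.le,
          finrank_euclideanSpace_fin, ENNReal.toReal_mul,
          ENNReal.toReal_ofReal (by positivity)]
      rw [measureReal_def, hvol, smul_eq_mul] at hmono
      refine le_trans (le_of_eq ?_) hmono
      have h2Rn : (2 * R) ^ (-(n:ℝ)) = ((2 * R) ^ n)⁻¹ := by
        rw [← Real.rpow_natCast (2 * R) n, ← Real.rpow_neg (by positivity)]
      rw [h2Rn, mul_pow, hc]
      field_simp
    · have hI0 : I = 0 := by
        rw [hI]
        exact integral_undef hint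
      rw [hI0, Real.zero_rpow hp0.ne', mul_zero]
  refine ⟨⟨c, hcpos, key⟩, ?_⟩
  refine ⟨(1 / c) ^ (1 / (p - 1)), ?_⟩
  intro R hR
  set I : ℝ := ∫ y in Metric.ball (0 : EuclideanSpace ℝ (Fin n)) R, u y ^ p with hI
  set M : ℝ := (1 / c) ^ (1 / (p - 1)) with hM
  have hMpos : 0 < M := Real.rpow_pos_of_pos (by positivity) _
  by_contra hlt
  push_neg at hlt
  have hIpos : 0 < I := lt_trans hMpos hlt
  have h1 : M ^ (p - 1) < I ^ (p - 1) :=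
    Real.rpow_lt_rpow hMpos.le hlt (by linarith)
  have h2 : M ^ (p - 1) = 1 / c := by
    rw [hM, ← Real.rpow_mul (by positivity), one_div_mul_cancel (by linarith : p - 1 ≠ 0),
      Real.rpow_one]
  have h3 : I ^ p = I * I ^ (p - 1) := by
    rw [← Real.rpow_one_add' hIpos.le (by linarith : 1 + (p - 1) ≠ 0)]
    ring_nf
  have hkey := key R hR
  rw [← hI, h3] at hkey
  have : c * (I * (1 / c)) < c * (I * I ^ (p - 1)) := by
    apply mul_lt_mul_of_pos_left _ hcpos
    apply mul_lt_mul_of_pos_left _ hIpos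
    rw [← h2]; exact h1
  rw [mul_comm I (1 / c), ← mul_assoc, mul_one_div_cancel hcpos.ne', one_mul] at this
  linarith
end

section
/- Let n ≥ 3 and γ ∈ (1, n) with m = γ/(γ-1), and let θ > 0. For u(x) = (1+|x|^m)^{-θ}, the γ-Laplacian satisfies -Δ_γ u = (mθ)^{γ-1}(1+r^m)^{-(θ+1)(γ-1)} · (n + (n-(θ+1)γ)r^m)/(1+r^m), where r = |x|. In particular, if (θ+1)γ < n then -Δ_γ u is comparable to u^{(θ+1)(γ-1)/θ} uniformly on ℝⁿ. -/
open MeasureTheory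

/-- Divergence of a vector field on ℝⁿ. -/
noncomputable def diverg {n : ℕ} (F : EuclideanSpace ℝ (Fin n) → EuclideanSpace ℝ (Fin n))
    (x : EuclideanSpace ℝ (Fin n)) : ℝ :=
  ∑ i : Fin n, fderiv ℝ (fun y => F y i) x (EuclideanSpace.basisFun (Fin n) ℝ i)

/-- The γ-Laplacian `Δ_γ u = div(|∇u|^{γ-2} ∇u)`. -/
noncomputable def gammaLap {n : ℕ} (γ : ℝ) (u : EuclideanSpace ℝ (Fin n) → ℝ)
    (x : EuclideanSpace ℝ (Fin n)) : ℝ :=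
  diverg (fun y => ‖gradient u y‖ ^ (γ - 2) • gradient u y) x

section AuxLemmas

open Real Filter Asymptotics

variable {E : Type*} [NormedAddCommGroup E] [InnerProductSpace ℝ E]

theorem hasFDerivAt_norm_rpow_ne (m : ℝ) {x : E} (hx : x ≠ 0) :
    HasFDerivAt (fun y : E => ‖y‖ ^ m) ((m * ‖x‖ ^ (m - 2)) • innerSL ℝ x) x := by
  have hxn : (0:ℝ) < ‖x‖ := norm_pos_iff.2 hx
  have hsq : (0:ℝ) < ‖x‖ ^ (2:ℕ) := by positivity
  have h2 : HasFDerivAt (fun y : E => ‖y‖ ^ (2:ℕ)) ((2:ℕ) • innerSL ℝ x) x :=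
    (hasStrictFDerivAt_norm_sq x).hasFDerivAt
  have h3 : HasDerivAt (fun t : ℝ => t ^ (m/2)) ((m/2) * (‖x‖ ^ (2:ℕ)) ^ (m/2 - 1)) (‖x‖ ^ (2:ℕ)) :=
    Real.hasDerivAt_rpow_const (Or.inl hsq.ne')
  have h4 := h3.comp_hasFDerivAt x h2
  have hfun : (fun y : E => (‖y‖ ^ (2:ℕ)) ^ (m/2)) = fun y : E => ‖y‖ ^ m := by
    funext y
    rw [← Real.rpow_natCast ‖y‖ 2, ← Real.rpow_mul (norm_nonneg y)]
    congr 1; ring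
  have h4' : HasFDerivAt (fun y : E => (‖y‖ ^ (2:ℕ)) ^ (m/2))
      ((m / 2 * (‖x‖ ^ (2:ℕ)) ^ (m / 2 - 1)) • (2:ℕ) • innerSL ℝ x) x := h4
  rw [hfun] at h4'
  convert h4' using 1
  ext y
  have : (‖x‖ ^ (2:ℕ)) ^ (m/2 - 1) = ‖x‖ ^ (m - 2) := by
    rw [← Real.rpow_natCast ‖x‖ 2, ← Real.rpow_mul (norm_nonneg x)]
    ring_nf
  simp only [ContinuousLinearMap.smul_apply, innerSL_apply_apply, this, smul_eq_mul,
    ContinuousLinearMap.coe_smul', Pi.smul_apply, nsmul_eq_mul]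
  push_cast
  ring

theorem hasFDerivAt_norm_rpow_zero (m : ℝ) (hm : 1 < m) :
    HasFDerivAt (fun y : E => ‖y‖ ^ m) (0 : E →L[ℝ] ℝ) (0 : E) := by
  rw [hasFDerivAt_iff_isLittleO_nhds_zero]
  rw [isLittleO_iff]
  intro c hc
  have ht : Filter.Tendsto (fun y : E => ‖y‖ ^ (m - 1)) (nhds 0) (nhds 0) := by
    have h1 : Filter.Tendsto (fun y : E => ‖y‖) (nhds 0) (nhds 0) := by
      simpa using (continuous_norm (E := E)).tendsto 0
    have h2 : Filter.Tendsto (fun t : ℝ => t ^ (m - 1)) (nhds 0) (nhds 0) := by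
      have := (Real.continuousAt_rpow_const 0 (m-1) (Or.inr (by linarith))).tendsto
      simpa [Real.zero_rpow (by linarith : m - 1 ≠ 0)] using this
    exact h2.comp h1
  filter_upwards [ht.eventually (ge_mem_nhds hc)] with y hy
  rcases eq_or_ne y 0 with rfl | hy0
  · simp [Real.zero_rpow (by linarith : m ≠ 0)]
  · have hyn : (0:ℝ) < ‖y‖ := norm_pos_iff.2 hy0
    have hsplit := Real.rpow_add hyn (m-1) 1
    rw [Real.rpow_one, show m - 1 + 1 = m by ring] at hsplit
    simp only [zero_add, norm_zero, Real.zero_rpow (by linarith : m ≠ 0), ContinuousLinearMap.zero_apply, sub_zero]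
    rw [Real.norm_of_nonneg (Real.rpow_nonneg (norm_nonneg y) m), hsplit]
    have : ‖y‖ ^ (m-1) * ‖y‖ ≤ c * ‖y‖ := by
      apply mul_le_mul_of_nonneg_right hy (norm_nonneg y)
    simpa using this

theorem hasFDerivAt_base_rpow_ne (m b : ℝ) {x : E} (hx : x ≠ 0) :
    HasFDerivAt (fun y : E => (1 + ‖y‖ ^ m) ^ b)
      ((b * (1 + ‖x‖ ^ m) ^ (b - 1) * (m * ‖x‖ ^ (m - 2))) • innerSL ℝ x) x := by
  have hA : (0:ℝ) < 1 + ‖x‖ ^ m := by positivity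
  have h1 : HasFDerivAt (fun y : E => 1 + ‖y‖ ^ m) ((m * ‖x‖ ^ (m - 2)) • innerSL ℝ x) x :=
    (hasFDerivAt_norm_rpow_ne m hx).const_add 1
  have h2 : HasDerivAt (fun t : ℝ => t ^ b) (b * (1 + ‖x‖ ^ m) ^ (b - 1)) (1 + ‖x‖ ^ m) :=
    Real.hasDerivAt_rpow_const (Or.inl hA.ne')
  have h3 := h2.comp_hasFDerivAt x h1
  have h4 : HasFDerivAt (fun y : E => (1 + ‖y‖ ^ m) ^ b)
      ((b * (1 + ‖x‖ ^ m) ^ (b - 1)) • (m * ‖x‖ ^ (m - 2)) • innerSL ℝ x) x := h3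
  rwa [smul_smul] at h4

theorem hasFDerivAt_base_rpow_zero (m b : ℝ) (hm : 1 < m) :
    HasFDerivAt (fun y : E => (1 + ‖y‖ ^ m) ^ b) (0 : E →L[ℝ] ℝ) (0 : E) := by
  have h1 : HasFDerivAt (fun y : E => 1 + ‖y‖ ^ m) (0 : E →L[ℝ] ℝ) (0 : E) :=
    (hasFDerivAt_norm_rpow_zero m hm).const_add 1
  have hA : (0:ℝ) < 1 + ‖(0:E)‖ ^ m := by
    simp [Real.zero_rpow (by linarith : m ≠ 0)]
  have h2 : HasDerivAt (fun t : ℝ => t ^ b) (b * (1 + ‖(0:E)‖ ^ m) ^ (b - 1)) (1 + ‖(0:E)‖ ^ m) :=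
    Real.hasDerivAt_rpow_const (Or.inl hA.ne')
  have h3 := h2.comp_hasFDerivAt (0:E) h1
  simpa [Function.comp_def] using h3

theorem gradient_base_rpow_ne [CompleteSpace E] (m b : ℝ) {x : E} (hx : x ≠ 0) :
    gradient (fun y : E => (1 + ‖y‖ ^ m) ^ b) x
      = (b * (1 + ‖x‖ ^ m) ^ (b - 1) * (m * ‖x‖ ^ (m - 2))) • x := by
  have h : HasGradientAt (fun y : E => (1 + ‖y‖ ^ m) ^ b)
      ((b * (1 + ‖x‖ ^ m) ^ (b - 1) * (m * ‖x‖ ^ (m - 2))) • x) x := by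
    rw [hasGradientAt_iff_hasFDerivAt]
    convert hasFDerivAt_base_rpow_ne m b hx using 1
    ext y
    simp [InnerProductSpace.toDual_apply_apply, inner_smul_left]
    ext y
    simp [InnerProductSpace.toDual_apply_apply, inner_smul_left]
  exact h.gradient

theorem gradient_base_rpow_zero [CompleteSpace E] (m b : ℝ) (hm : 1 < m) :
    gradient (fun y : E => (1 + ‖y‖ ^ m) ^ b) (0:E) = 0 := by
  have h : HasGradientAt (fun y : E => (1 + ‖y‖ ^ m) ^ b) (0:E) (0:E) := by
    rw [hasGradientAt_iff_hasFDerivAt]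
    simpa using hasFDerivAt_base_rpow_zero m b hm
  exact h.gradient

theorem scalar_key {γ θ m r A : ℝ} (hγ : 1 < γ) (hm : m = γ/(γ-1)) (hθ : 0 < θ)
    (hr : 0 < r) (hA : 0 < A) :
    ((θ * A^(-θ-1) * (m * r^(m-2))) * r) ^ (γ-2) * ((-θ) * A^(-θ-1) * (m * r^(m-2)))
      = -((m*θ)^(γ-1) * A^(-((θ+1)*(γ-1)))) := by
  have hγ1 : γ - 1 ≠ 0 := by intro h; linarith [sub_eq_zero.mp h]
  have hm0 : 0 < m := by rw [hm]; apply div_pos <;> linarith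
  have key1 : (m-1)*(γ-2) = -(m-2) := by
    rw [hm]; field_simp; ring
  have e0 : (θ * A^(-θ-1) * (m * r^(m-2))) * r = (θ*m) * ((A^(-θ-1)) * (r^(m-2) * r)) := by ring
  rw [e0, Real.mul_rpow (by positivity) (by positivity),
    Real.mul_rpow (by positivity) (by positivity),
    show r^(m-2)*r = r^(m-2+1) from (Real.rpow_add_one hr.ne' (m-2)).symm,
    Real.mul_rpow (by positivity) (by positivity),
    ← Real.rpow_mul hA.le, ← Real.rpow_mul hr.le,
    show (m-2+1)*(γ-2) = -(m-2) by rw [show m-2+1 = m-1 by ring, key1]]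
  rw [show -((θ+1)*(γ-1)) = ((-θ-1)*(γ-2)) + (-θ-1) by ring, Real.rpow_add hA,
    show (γ-1) = (γ-2) + 1 by ring, Real.rpow_add_one (by positivity : m*θ ≠ 0),
    Real.mul_rpow hm0.le hθ.le]
  rw [Real.rpow_neg hr.le]
  have hrm2 : r ^ (m-2) ≠ 0 := by positivity
  field_simp

theorem field_eq [CompleteSpace E] (γ θ m : ℝ) (hγ : 1 < γ) (hm : m = γ/(γ-1)) (hθ : 0 < θ) :
    (fun y : E => ‖gradient (fun z : E => (1+‖z‖^m)^(-θ)) y‖ ^ (γ-2) •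
        gradient (fun z : E => (1+‖z‖^m)^(-θ)) y)
      = fun y : E => ((-((m*θ)^(γ-1))) * (1+‖y‖^m)^(-((θ+1)*(γ-1)))) • y := by
  have hm1 : 1 < m := by
    rw [hm, lt_div_iff₀ (by linarith)]; linarith
  funext y
  rcases eq_or_ne y 0 with rfl | hy
  · rw [gradient_base_rpow_zero m (-θ) hm1]
    simp
  · have hr : (0:ℝ) < ‖y‖ := norm_pos_iff.2 hy
    have hA : (0:ℝ) < 1 + ‖y‖^m := by positivity
    rw [gradient_base_rpow_ne m (-θ) hy]
    set c : ℝ := (-θ) * (1 + ‖y‖^m)^(-θ-1) * (m * ‖y‖^(m-2)) with hc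
    have habs : ‖c‖ = θ * (1 + ‖y‖^m)^(-θ-1) * (m * ‖y‖^(m-2)) := by
      rw [Real.norm_eq_abs, show c = -(θ * (1 + ‖y‖^m)^(-θ-1) * (m * ‖y‖^(m-2))) by rw [hc]; ring,
        abs_neg, abs_of_nonneg (by positivity)]
    rw [norm_smul, habs, smul_smul]
    congr 1
    have := scalar_key (A := 1 + ‖y‖^m) (r := ‖y‖) hγ hm hθ hr hA
    rw [hc]
    rw [this]
    ring

theorem sum_sq_eq (n : ℕ) (x : EuclideanSpace ℝ (Fin n)) :
    ∑ i : Fin n, x i * x i = ‖x‖^2 := by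
  rw [← real_inner_self_eq_norm_sq, PiLp.inner_apply]
  simp [mul_comm, sq]

theorem basisFun_self_apply (n : ℕ) (i : Fin n) :
    (EuclideanSpace.basisFun (Fin n) ℝ i : EuclideanSpace ℝ (Fin n)) i = 1 := by
  rw [EuclideanSpace.basisFun_apply, EuclideanSpace.single_apply]; simp

theorem inner_basisFun_self (n : ℕ) (x : EuclideanSpace ℝ (Fin n)) (i : Fin n) :
    (inner ℝ x ((EuclideanSpace.basisFun (Fin n) ℝ) i) : ℝ) = x i := by
  rw [EuclideanSpace.basisFun_apply]
  simp [PiLp.inner_apply, EuclideanSpace.single_apply, mul_ite]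

theorem diverg_field_ne (n : ℕ) (K b m : ℝ) (hm : 1 < m)
    {x : EuclideanSpace ℝ (Fin n)} (hx : x ≠ 0) :
    diverg (fun y => (K * (1+‖y‖^m)^b) • y) x
      = n * (K * (1+‖x‖^m)^b)
        + K * (b * (1+‖x‖^m)^(b-1) * (m*‖x‖^(m-2))) * ‖x‖^2 := by
  have hD := (hasFDerivAt_base_rpow_ne m b hx).const_mul K
  have hcomp : ∀ i : Fin n, fderiv ℝ (fun y : EuclideanSpace ℝ (Fin n) => (K * (1+‖y‖^m)^b) * y i) x
      = (K * (1+‖x‖^m)^b) • (EuclideanSpace.proj i : EuclideanSpace ℝ (Fin n) →L[ℝ] ℝ)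
        + (x i) • (K • ((b * (1 + ‖x‖ ^ m) ^ (b - 1) * (m * ‖x‖ ^ (m - 2))) • innerSL ℝ x)) := by
    intro i
    exact (hD.mul ((EuclideanSpace.proj i (𝕜 := ℝ)).hasFDerivAt)).fderiv
  unfold diverg
  have happ : ∀ i : Fin n,
      fderiv ℝ (fun y : EuclideanSpace ℝ (Fin n) =>
        ((K * (1+‖y‖^m)^b) • y) i) x (EuclideanSpace.basisFun (Fin n) ℝ i)
      = (K * (1+‖x‖^m)^b) + (K * (b * (1 + ‖x‖ ^ m) ^ (b - 1) * (m * ‖x‖ ^ (m - 2)))) * (x i * x i) := by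
    intro i
    have hfe : (fun y : EuclideanSpace ℝ (Fin n) => ((K * (1+‖y‖^m)^b) • y) i)
        = fun y : EuclideanSpace ℝ (Fin n) => (K * (1+‖y‖^m)^b) * y i := by
      funext y; simp [PiLp.smul_apply]
    rw [hfe, hcomp i]
    simp only [ContinuousLinearMap.add_apply, ContinuousLinearMap.smul_apply,
      PiLp.proj_apply, smul_eq_mul, innerSL_apply_apply]
    rw [basisFun_self_apply, inner_basisFun_self]
    ring
  rw [Finset.sum_congr rfl (fun i _ => happ i), Finset.sum_add_distrib]
  simp only [Finset.sum_const, Finset.card_univ, Fintype.card_fin, nsmul_eq_mul]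
  rw [← Finset.mul_sum, sum_sq_eq]

theorem diverg_field_zero (n : ℕ) (K b m : ℝ) (hm : 1 < m) :
    diverg (fun y => (K * (1+‖y‖^m)^b) • y) (0 : EuclideanSpace ℝ (Fin n)) = n * K := by
  have hD := (hasFDerivAt_base_rpow_zero m b hm (E := EuclideanSpace ℝ (Fin n))).const_mul K
  have hcomp : ∀ i : Fin n, fderiv ℝ (fun y : EuclideanSpace ℝ (Fin n) => (K * (1+‖y‖^m)^b) * y i)
        (0 : EuclideanSpace ℝ (Fin n))
      = (K * (1+‖(0:EuclideanSpace ℝ (Fin n))‖^m)^b) •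
          (EuclideanSpace.proj i : EuclideanSpace ℝ (Fin n) →L[ℝ] ℝ)
        + ((0:EuclideanSpace ℝ (Fin n)) i) • (K • (0 : EuclideanSpace ℝ (Fin n) →L[ℝ] ℝ)) := by
    intro i
    exact (hD.mul ((EuclideanSpace.proj i (𝕜 := ℝ)).hasFDerivAt)).fderiv
  unfold diverg
  have happ : ∀ i : Fin n,
      fderiv ℝ (fun y : EuclideanSpace ℝ (Fin n) =>
        ((K * (1+‖y‖^m)^b) • y) i) (0 : EuclideanSpace ℝ (Fin n))
          (EuclideanSpace.basisFun (Fin n) ℝ i) = K := by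
    intro i
    have hfe : (fun y : EuclideanSpace ℝ (Fin n) => ((K * (1+‖y‖^m)^b) • y) i)
        = fun y : EuclideanSpace ℝ (Fin n) => (K * (1+‖y‖^m)^b) * y i := by
      funext y; simp [PiLp.smul_apply]
    rw [hfe, hcomp i]
    simp only [ContinuousLinearMap.add_apply, ContinuousLinearMap.smul_apply,
      PiLp.proj_apply, smul_eq_mul, ContinuousLinearMap.zero_apply]
    rw [basisFun_self_apply]
    simp [Real.zero_rpow (by linarith : m ≠ 0)]
  rw [Finset.sum_congr rfl (fun i _ => happ i)]
  simp [mul_comm]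

theorem neg_gammaLap_formula (n : ℕ) (γ m θ : ℝ) (hγ : 1 < γ) (hm : m = γ/(γ-1))
    (hθ : 0 < θ) (x : EuclideanSpace ℝ (Fin n)) :
    -gammaLap γ (fun z : EuclideanSpace ℝ (Fin n) => (1+‖z‖^m)^(-θ)) x =
      (m*θ)^(γ-1) * (1+‖x‖^m)^(-((θ+1)*(γ-1))) *
        ((n + (n - (θ+1)*γ)*‖x‖^m)/(1+‖x‖^m)) := by
  have hγ1 : γ - 1 ≠ 0 := by intro h; linarith [sub_eq_zero.mp h]
  have hm1 : 1 < m := by rw [hm, lt_div_iff₀ (by linarith)]; linarith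
  have hmθ : 0 < m * θ := by
    have : 0 < m := by linarith
    positivity
  set C : ℝ := (m*θ)^(γ-1) with hC
  have hCpos : 0 < C := Real.rpow_pos_of_pos hmθ _
  set β : ℝ := (θ+1)*(γ-1) with hβ
  have hβm : β * m = (θ+1)*γ := by rw [hβ, hm]; field_simp
  unfold gammaLap
  rw [field_eq γ θ m hγ hm hθ]
  rcases eq_or_ne x 0 with rfl | hx
  · rw [diverg_field_zero n (-C) (-β) m hm1]
    rw [norm_zero, Real.zero_rpow (by linarith : m ≠ 0)]
    simp [mul_comm]
  · have hr : (0:ℝ) < ‖x‖ := norm_pos_iff.2 hx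
    have hA : (0:ℝ) < 1 + ‖x‖^m := by positivity
    rw [diverg_field_ne n (-C) (-β) m hm1 hx]
    have hr2 : ‖x‖^(m-2) * ‖x‖^(2:ℕ) = ‖x‖^m := by
      rw [← Real.rpow_natCast ‖x‖ 2, ← Real.rpow_add hr]
      norm_num
    have hAβ : (1+‖x‖^m)^(-β) = (1+‖x‖^m)^(-β-1) * (1+‖x‖^m) := by
      rw [← Real.rpow_add_one hA.ne' (-β-1)]; ring_nf
    rw [show (C * (1 + ‖x‖ ^ m) ^ (-β) * ((↑n + (↑n - (θ + 1) * γ) * ‖x‖ ^ m) / (1 + ‖x‖ ^ m)))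
        = C * (1 + ‖x‖ ^ m) ^ (-β-1) * (↑n + (↑n - β * m) * ‖x‖ ^ m) from by
      rw [hβm, hAβ]; field_simp]
    rw [hAβ]
    linear_combination (-(C*β*m*(1+‖x‖^m)^(-β-1))) * hr2

end AuxLemmas

theorem stmt_11 (n : ℕ) (hn : 3 ≤ n) (γ : ℝ) (hγ1 : 1 < γ) (hγn : γ < n)
    (m : ℝ) (hm : m = γ / (γ - 1)) (θ : ℝ) (hθ : 0 < θ)
    (u : EuclideanSpace ℝ (Fin n) → ℝ)
    (hu : ∀ x, u x = (1 + ‖x‖ ^ m) ^ (-θ)) :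
    (∀ x, -gammaLap γ u x =
        (m * θ) ^ (γ - 1) * (1 + ‖x‖ ^ m) ^ (-((θ + 1) * (γ - 1))) *
          ((n + (n - (θ + 1) * γ) * ‖x‖ ^ m) / (1 + ‖x‖ ^ m))) ∧
    ((θ + 1) * γ < n →
      ∃ c₁ c₂ : ℝ, 0 < c₁ ∧ c₁ ≤ c₂ ∧
        ∀ x, c₁ * u x ^ ((θ + 1) * (γ - 1) / θ) ≤ -gammaLap γ u x ∧
          -gammaLap γ u x ≤ c₂ * u x ^ ((θ + 1) * (γ - 1) / θ)) := by
  obtain rfl : u = fun x : EuclideanSpace ℝ (Fin n) => (1 + ‖x‖ ^ m) ^ (-θ) := funext hu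
  have hform := neg_gammaLap_formula n γ m θ hγ1 hm hθ
  refine ⟨hform, fun hK => ?_⟩
  have hmθ : 0 < m * θ := by
    have : 0 < m := by rw [hm]; apply div_pos <;> linarith
    positivity
  set C : ℝ := (m*θ)^(γ-1) with hC
  have hCpos : 0 < C := Real.rpow_pos_of_pos hmθ _
  have hKpos : 0 < (θ+1)*γ := by positivity
  refine ⟨C * (n - (θ+1)*γ), C * n, by nlinarith, by nlinarith, fun x => ?_⟩
  have hA : (0:ℝ) < 1 + ‖x‖^m := by positivity
  have ht0 : (0:ℝ) ≤ ‖x‖^m := Real.rpow_nonneg (norm_nonneg x) m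
  have hus : ((1 + ‖x‖ ^ m) ^ (-θ)) ^ ((θ + 1) * (γ - 1) / θ)
      = (1 + ‖x‖ ^ m) ^ (-((θ + 1) * (γ - 1))) := by
    rw [← Real.rpow_mul hA.le]
    congr 1
    field_simp
  rw [hform x, hus]
  have h1 : ((n:ℝ) - (θ+1)*γ) ≤ (↑n + (↑n - (θ+1)*γ) * ‖x‖ ^ m) / (1 + ‖x‖ ^ m) := by
    rw [le_div_iff₀ hA]; nlinarith
  have h2 : (↑n + (↑n - (θ+1)*γ) * ‖x‖ ^ m) / (1 + ‖x‖ ^ m) ≤ (n:ℝ) := by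
    rw [div_le_iff₀ hA]; nlinarith
  have hP : (0:ℝ) ≤ C * (1 + ‖x‖ ^ m) ^ (-((θ + 1) * (γ - 1))) := by positivity
  constructor
  · calc C * ((n:ℝ) - (θ+1)*γ) * (1 + ‖x‖ ^ m) ^ (-((θ + 1) * (γ - 1)))
        = (C * (1 + ‖x‖ ^ m) ^ (-((θ + 1) * (γ - 1)))) * ((n:ℝ) - (θ+1)*γ) := by ring
      _ ≤ (C * (1 + ‖x‖ ^ m) ^ (-((θ + 1) * (γ - 1)))) *
            ((↑n + (↑n - (θ+1)*γ) * ‖x‖ ^ m) / (1 + ‖x‖ ^ m)) :=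
          mul_le_mul_of_nonneg_left h1 hP
  · calc C * (1 + ‖x‖ ^ m) ^ (-((θ + 1) * (γ - 1))) *
          ((↑n + (↑n - (θ+1)*γ) * ‖x‖ ^ m) / (1 + ‖x‖ ^ m))
        ≤ (C * (1 + ‖x‖ ^ m) ^ (-((θ + 1) * (γ - 1)))) * (n:ℝ) :=
          mul_le_mul_of_nonneg_left h2 hP
      _ = C * ↑n * (1 + ‖x‖ ^ m) ^ (-((θ + 1) * (γ - 1))) := by ring
end

section
/- Let a ≥ 4n and let (u,v) solve the ODE system u'' + ((n-1)/r)u' = -v, v'' + ((n-1)/r)v' = -u^p on [0,1] with u(0)=1, v(0)=a, u'(0)=v'(0)=0, p > 0, where u, v are C² and initially positive. If u(r) ≤ 1 on the interval where both are positive, then v(r) ≥ a/2 ≥ 2n and u(r) ≤ 1 - a r²/(4n) for r in that interval; consequently there exists R ∈ (0,1] with u(R) = 0 while u, v > 0 on [0,R). -/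
open Set

lemma aux_deriv (n : ℕ) (hn : 1 ≤ n) (w : ℝ → ℝ)
    (hw' : Differentiable ℝ (deriv w)) (c : ℝ) {x : ℝ} (hx : 0 < x) :
    HasDerivAt (fun y => y ^ (n-1) * deriv w y + c * y ^ n)
      (x ^ (n-1) * (deriv (deriv w) x + (((n:ℝ)-1)/x) * deriv w x + c * n)) x := by
  have h1 : HasDerivAt (fun y => y ^ (n-1) * deriv w y)
      ((↑(n-1) * x ^ (n-1-1)) * deriv w x + x^(n-1) * deriv (deriv w) x) x :=
    (hasDerivAt_pow (n-1) x).mul (hw' x).hasDerivAt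
  have h2 : HasDerivAt (fun y => c * y ^ n) (c * (↑n * x ^ (n-1))) x :=
    (hasDerivAt_pow n x).const_mul c
  refine (h1.add h2).congr_deriv (Eq.symm ?_)
  have hx' : x ≠ 0 := ne_of_gt hx
  obtain ⟨m, rfl⟩ : ∃ m, n = m + 1 := ⟨n - 1, (Nat.succ_pred_eq_of_pos hn).symm⟩
  cases m with
  | zero => simp
  | succ k =>
    simp only [Nat.add_sub_cancel, Nat.succ_sub_one]
    push_cast
    field_simp
    ring

lemma key_est (n : ℕ) (hn : 1 ≤ n) (a p : ℝ) (hp : 0 < p) (ha : 4 * n ≤ a)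
    (u v : ℝ → ℝ) (hu : ContDiff ℝ 2 u) (hv : ContDiff ℝ 2 v)
    (hu0 : u 0 = 1) (hv0 : v 0 = a) (hu'0 : deriv u 0 = 0) (hv'0 : deriv v 0 = 0)
    (hode1 : ∀ r ∈ Ioc (0 : ℝ) 1,
      deriv (deriv u) r + (((n : ℝ) - 1) / r) * deriv u r = -v r)
    (hode2 : ∀ r ∈ Ioc (0 : ℝ) 1,
      deriv (deriv v) r + (((n : ℝ) - 1) / r) * deriv v r = -(u r ^ p))
    (hub : ∀ r ∈ Icc (0 : ℝ) 1, (∀ s ∈ Icc 0 r, 0 < u s ∧ 0 < v s) → u r ≤ 1) :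
    ∀ r ∈ Icc (0 : ℝ) 1, (∀ s ∈ Icc 0 r, 0 < u s ∧ 0 < v s) →
      a / 2 ≤ v r ∧ u r ≤ 1 - a * r ^ 2 / (4 * n) := by
  have hn0 : (0:ℝ) < n := by exact_mod_cast hn
  have hu2 : ContDiff ℝ ((1:ℕ∞)+1) u := by exact_mod_cast hu
  have hv2 : ContDiff ℝ ((1:ℕ∞)+1) v := by exact_mod_cast hv
  have hud : Differentiable ℝ u := hu2.differentiable (by norm_num)
  have hvd : Differentiable ℝ v := hv2.differentiable (by norm_num)
  have hud' : Differentiable ℝ (deriv u) :=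
    ((contDiff_succ_iff_deriv.mp hu2).2.2).differentiable (by norm_num)
  have hvd' : Differentiable ℝ (deriv v) :=
    ((contDiff_succ_iff_deriv.mp hv2).2.2).differentiable (by norm_num)
  intro r hr hgood
  have hr0 : (0:ℝ) ≤ r := hr.1
  have hr1 : r ≤ 1 := hr.2
  have h0mem : (0:ℝ) ∈ Icc (0:ℝ) r := ⟨le_rfl, hr0⟩
  -- g monotone
  set g : ℝ → ℝ := fun y => y ^ (n-1) * deriv v y + (1/(n:ℝ)) * y ^ n with hgdef
  have hgmono : MonotoneOn g (Icc 0 r) := by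
    apply monotoneOn_of_deriv_nonneg (convex_Icc 0 r)
    · exact ((continuous_pow _).mul hvd'.continuous |>.add
        (continuous_const.mul (continuous_pow _))).continuousOn
    · rw [interior_Icc]
      intro x hx
      exact (aux_deriv n hn v hvd' (1/(n:ℝ)) hx.1).differentiableAt.differentiableWithinAt
    · rw [interior_Icc]
      intro x hx
      rw [(aux_deriv n hn v hvd' (1/(n:ℝ)) hx.1).deriv]
      have hode := hode2 x ⟨hx.1, hx.2.le.trans hr1⟩
      have hgx : ∀ s ∈ Icc (0:ℝ) x, 0 < u s ∧ 0 < v s :=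
        fun s hs => hgood s ⟨hs.1, hs.2.trans hx.2.le⟩
      have hux : u x ≤ 1 := hub x ⟨hx.1.le, hx.2.le.trans hr1⟩ hgx
      have hup : u x ^ p ≤ 1 :=
        Real.rpow_le_one (hgx x ⟨hx.1.le, le_rfl⟩).1.le hux hp.le
      have h1 : (1/(n:ℝ)) * n = 1 := one_div_mul_cancel hn0.ne'
      have heq : deriv (deriv v) x + (((n:ℝ)-1)/x) * deriv v x + (1/(n:ℝ)) * n
          = 1 - u x ^ p := by rw [h1]; linarith
      rw [heq]
      exact mul_nonneg (pow_nonneg hx.1.le _) (by linarith)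
  have hg0 : g 0 = 0 := by
    simp [hgdef, hv'0, zero_pow (by omega : n ≠ 0)]
  -- deriv v lower bound
  have hdv : ∀ x ∈ Ioc (0:ℝ) r, -(x/(n:ℝ)) ≤ deriv v x := by
    intro x hx
    have h2 := hgmono h0mem ⟨hx.1.le, hx.2⟩ hx.1.le
    rw [hg0] at h2
    have hxp : (0:ℝ) < x ^ (n-1) := pow_pos hx.1 _
    have hxn : x ^ (n-1) * x = x ^ n := by
      rw [← pow_succ, Nat.sub_add_cancel hn]
    have h3 : 0 ≤ x ^ (n-1) * (deriv v x + x/(n:ℝ)) := by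
      have e : x ^ (n-1) * (deriv v x + x/(n:ℝ))
          = x ^ (n-1) * deriv v x + (1/(n:ℝ)) * x ^ n := by
        rw [← hxn]; field_simp
      rw [e]; simpa [hgdef] using h2
    have := div_nonneg h3 hxp.le
    rw [mul_div_cancel_left₀ _ hxp.ne'] at this
    linarith
  -- h monotone : v bound
  have hhmono : MonotoneOn (fun y => v y + y^2/(2*(n:ℝ))) (Icc 0 r) := by
    apply monotoneOn_of_deriv_nonneg (convex_Icc 0 r)
    · exact (hvd.continuous.add ((continuous_pow 2).div_const _)).continuousOn
    · rw [interior_Icc]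
      intro x hx
      exact ((hvd x).hasDerivAt.add ((hasDerivAt_pow 2 x).div_const _)).differentiableAt.differentiableWithinAt
    · rw [interior_Icc]
      intro x hx
      rw [(show HasDerivAt (fun y => v y + y^2/(2*(n:ℝ))) _ x from
        (hvd x).hasDerivAt.add ((hasDerivAt_pow 2 x).div_const (2*(n:ℝ)))).deriv]
      have := hdv x ⟨hx.1, hx.2.le⟩
      have he : ((2:ℕ):ℝ) * x ^ (2-1) / (2*(n:ℝ)) = x / n := by
        push_cast; field_simp
      rw [he]
      linarith
  have hvbd : ∀ x ∈ Icc (0:ℝ) r, a - x^2/(2*(n:ℝ)) ≤ v x := by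
    intro x hx
    have := hhmono h0mem hx hx.1
    simp [hv0] at this
    linarith
  have hvhalf : ∀ x ∈ Icc (0:ℝ) r, a/2 ≤ v x := by
    intro x hx
    have h1 := hvbd x hx
    have hx1 : x ≤ 1 := hx.2.trans hr1
    have hx0 : 0 ≤ x := hx.1
    have hn1 : (1:ℝ) ≤ n := by exact_mod_cast hn
    have hx2 : x^2 ≤ 1 := by nlinarith
    have h2 : x^2/(2*(n:ℝ)) ≤ a/2 := by
      rw [div_le_div_iff₀ (by positivity) (by norm_num)]
      nlinarith [mul_le_mul_of_nonneg_right ha (by positivity : (0:ℝ) ≤ 2*(n:ℝ))]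
    linarith
  refine ⟨hvhalf r ⟨hr0, le_rfl⟩, ?_⟩
  -- f antitone
  set f : ℝ → ℝ := fun y => y ^ (n-1) * deriv u y + (a/(2*(n:ℝ))) * y ^ n with hfdef
  have hfanti : AntitoneOn f (Icc 0 r) := by
    apply antitoneOn_of_deriv_nonpos (convex_Icc 0 r)
    · exact ((continuous_pow _).mul hud'.continuous |>.add
        (continuous_const.mul (continuous_pow _))).continuousOn
    · rw [interior_Icc]
      intro x hx
      exact (aux_deriv n hn u hud' (a/(2*(n:ℝ))) hx.1).differentiableAt.differentiableWithinAt
    · rw [interior_Icc]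
      intro x hx
      rw [(aux_deriv n hn u hud' (a/(2*(n:ℝ))) hx.1).deriv]
      have hode := hode1 x ⟨hx.1, hx.2.le.trans hr1⟩
      have hvx := hvhalf x ⟨hx.1.le, hx.2.le⟩
      have h1 : (a/(2*(n:ℝ))) * n = a/2 := by field_simp
      have heq : deriv (deriv u) x + (((n:ℝ)-1)/x) * deriv u x + (a/(2*(n:ℝ))) * n
          = a/2 - v x := by rw [h1]; linarith
      rw [heq]
      exact mul_nonpos_of_nonneg_of_nonpos (pow_nonneg hx.1.le _) (by linarith)
  have hf0 : f 0 = 0 := by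
    simp [hfdef, hu'0, zero_pow (by omega : n ≠ 0)]
  have hdu : ∀ x ∈ Ioc (0:ℝ) r, deriv u x ≤ -(a*x/(2*(n:ℝ))) := by
    intro x hx
    have h2 := hfanti h0mem ⟨hx.1.le, hx.2⟩ hx.1.le
    rw [hf0] at h2
    have hxp : (0:ℝ) < x ^ (n-1) := pow_pos hx.1 _
    have hxn : x ^ (n-1) * x = x ^ n := by
      rw [← pow_succ, Nat.sub_add_cancel hn]
    have h3 : x ^ (n-1) * (deriv u x + a*x/(2*(n:ℝ))) ≤ 0 := by
      have e : x ^ (n-1) * (deriv u x + a*x/(2*(n:ℝ)))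
          = x ^ (n-1) * deriv u x + (a/(2*(n:ℝ))) * x ^ n := by
        rw [← hxn]; field_simp
      rw [e]; simpa [hfdef] using h2
    have := div_nonpos_of_nonpos_of_nonneg h3 hxp.le
    rw [mul_div_cancel_left₀ _ hxp.ne'] at this
    linarith
  -- F antitone : u bound
  have hFanti : AntitoneOn (fun y => u y + a*y^2/(4*(n:ℝ))) (Icc 0 r) := by
    apply antitoneOn_of_deriv_nonpos (convex_Icc 0 r)
    · exact (hud.continuous.add ((continuous_const.mul (continuous_pow 2)).div_const _)).continuousOn
    · rw [interior_Icc]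
      intro x hx
      exact ((hud x).hasDerivAt.add
        (((hasDerivAt_pow 2 x).const_mul a).div_const _)).differentiableAt.differentiableWithinAt
    · rw [interior_Icc]
      intro x hx
      rw [(show HasDerivAt (fun y => u y + a*y^2/(4*(n:ℝ))) _ x from (hud x).hasDerivAt.add
        (((hasDerivAt_pow 2 x).const_mul a).div_const (4*(n:ℝ)))).deriv]
      have := hdu x ⟨hx.1, hx.2.le⟩
      have he : a * (((2:ℕ):ℝ) * x ^ (2-1)) / (4*(n:ℝ)) = a*x/(2*(n:ℝ)) := by
        push_cast; field_simp; ring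
      rw [he]
      linarith
  have := hFanti h0mem ⟨hr0, le_rfl⟩ hr0
  simp [hu0] at this
  linarith

theorem stmt_19 (n : ℕ) (hn : 1 ≤ n) (a p : ℝ) (hp : 0 < p) (ha : 4 * n ≤ a)
    (u v : ℝ → ℝ) (hu : ContDiff ℝ 2 u) (hv : ContDiff ℝ 2 v)
    (hu0 : u 0 = 1) (hv0 : v 0 = a) (hu'0 : deriv u 0 = 0) (hv'0 : deriv v 0 = 0)
    (hode1 : ∀ r ∈ Ioc (0 : ℝ) 1,
      deriv (deriv u) r + (((n : ℝ) - 1) / r) * deriv u r = -v r)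
    (hode2 : ∀ r ∈ Ioc (0 : ℝ) 1,
      deriv (deriv v) r + (((n : ℝ) - 1) / r) * deriv v r = -(u r ^ p))
    (hub : ∀ r ∈ Icc (0 : ℝ) 1, (∀ s ∈ Icc 0 r, 0 < u s ∧ 0 < v s) → u r ≤ 1) :
    (∀ r ∈ Icc (0 : ℝ) 1, (∀ s ∈ Icc 0 r, 0 < u s ∧ 0 < v s) →
        a / 2 ≤ v r ∧ 2 * (n : ℝ) ≤ a / 2 ∧ u r ≤ 1 - a * r ^ 2 / (4 * n)) ∧
      ∃ R ∈ Ioc (0 : ℝ) 1, u R = 0 ∧ ∀ r ∈ Ico 0 R, 0 < u r ∧ 0 < v r := by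
  have key := key_est n hn a p hp ha u v hu hv hu0 hv0 hu'0 hv'0 hode1 hode2 hub
  have hn1 : (1:ℝ) ≤ n := by exact_mod_cast hn
  constructor
  · intro r hr hgood
    obtain ⟨h1, h2⟩ := key r hr hgood
    exact ⟨h1, by linarith, h2⟩
  · have huc : Continuous u := hu.continuous
    have hvc : Continuous v := hv.continuous
    set B : Set ℝ := {x | x ∈ Icc (0:ℝ) 1 ∧ (u x ≤ 0 ∨ v x ≤ 0)} with hB
    have hBclosed : IsClosed B := by
      have hBeq : B = Icc 0 1 ∩ ({x | u x ≤ 0} ∪ {x | v x ≤ 0}) := by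
        ext x; simp [hB, Set.mem_inter_iff]
      rw [hBeq]
      exact isClosed_Icc.inter
        ((isClosed_le huc continuous_const).union (isClosed_le hvc continuous_const))
    have hBne : B.Nonempty := by
      by_contra h
      rw [Set.not_nonempty_iff_eq_empty] at h
      have hgood1 : ∀ s ∈ Icc (0:ℝ) 1, 0 < u s ∧ 0 < v s := by
        intro s hs
        by_contra hc
        simp only [not_and_or, not_lt] at hc
        have hsB : s ∈ B := ⟨hs, hc⟩
        rw [h] at hsB
        exact hsB
      have h2 := (key 1 ⟨zero_le_one, le_rfl⟩ hgood1).2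
      have hpos1 := (hgood1 1 ⟨zero_le_one, le_rfl⟩).1
      have h3 : (1:ℝ) ≤ a * 1^2/(4*n) := by
        rw [le_div_iff₀ (by positivity)]
        nlinarith
      linarith
    have hBbdd : BddBelow B := ⟨0, fun x hx => hx.1.1⟩
    set R := sInf B with hRdef
    have hRmem : R ∈ B := hBclosed.csInf_mem hBne hBbdd
    have hRnn : 0 ≤ R := le_csInf hBne (fun x hx => hx.1.1)
    have hR0 : 0 < R := by
      rcases hRnn.lt_or_eq with h | h
      · exact h
      · exfalso
        rw [← h] at hRmem
        rcases hRmem.2 with h' | h' <;> [linarith [hu0 ▸ h']; linarith [hv0 ▸ h']]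
    have hR1 : R ≤ 1 := by
      obtain ⟨b, hb⟩ := hBne
      exact (csInf_le hBbdd hb).trans hb.1.2
    have hpos : ∀ r ∈ Ico (0:ℝ) R, 0 < u r ∧ 0 < v r := by
      intro r hr
      by_contra hc
      simp only [not_and_or, not_lt] at hc
      have hrB : r ∈ B := ⟨⟨hr.1, hr.2.le.trans hR1⟩, hc⟩
      have := csInf_le hBbdd hrB
      linarith [hr.2]
    have hIoo : Ioo (0:ℝ) R ∈ nhdsWithin R (Iio R) :=
      Ioo_mem_nhdsLT hR0
    have htu : Filter.Tendsto u (nhdsWithin R (Iio R)) (nhds (u R)) :=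
      (huc.tendsto R).mono_left nhdsWithin_le_nhds
    have htv : Filter.Tendsto v (nhdsWithin R (Iio R)) (nhds (v R)) :=
      (hvc.tendsto R).mono_left nhdsWithin_le_nhds
    haveI : (nhdsWithin R (Iio R)).NeBot := nhdsLT_neBot R
    have huR : 0 ≤ u R := by
      apply ge_of_tendsto htu
      filter_upwards [hIoo] with x hx
      exact (hpos x ⟨hx.1.le, hx.2⟩).1.le
    have hvR : a/2 ≤ v R := by
      apply ge_of_tendsto htv
      filter_upwards [hIoo] with x hx
      have hgoodx : ∀ s ∈ Icc (0:ℝ) x, 0 < u s ∧ 0 < v s :=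
        fun s hs => hpos s ⟨hs.1, lt_of_le_of_lt hs.2 hx.2⟩
      exact (key x ⟨hx.1.le, (hx.2.le.trans hR1)⟩ hgoodx).1
    have huR0 : u R = 0 := by
      rcases hRmem.2 with h | h
      · linarith
      · exfalso; linarith
    exact ⟨R, ⟨hR0, hR1⟩, huR0, hpos⟩
end
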